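/- Let p, k, d be positive integers with 1/d = 1/2 - 3/p. The group with presentation ⟨J, P, R₁, R₂ | J³ = R₁^p = R₂^p = P^{3d} = (P⁻¹J)^k = 1, R₂ = P R₁ P⁻¹, R₂ = J R₁ J⁻¹, P = R₁R₂⟩ is isomorphic to the group with presentation ⟨J, R₁ | J³ = R₁^p = (R₁J)^{2k} = (R₁JR₁J²)^{3d} = 1, R₁ J R₁ J² R₁ J R₁^{p-1} J² R₁^{p-1} J R₁^{p-1} J² = 1⟩, via the map determined by sending J to J, R₁ to R₁, R₂ to J R₁ J⁻¹ and P to R₁ · J R₁ J⁻¹. -/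

import Mathlib

/-- Generators of the two-generator presentations of the 3-fold Deligne-Mostow lattices. -/
inductive Gen2 | J | R

/-- Generators of the four-generator presentations of the 3-fold Deligne-Mostow lattices. -/
inductive Gen4 | J | P | R₁ | R₂

namespace FourGen

/-- Shorthand for the free group generators. -/
def J : FreeGroup Gen4 := FreeGroup.of Gen4.J
def P : FreeGroup Gen4 := FreeGroup.of Gen4.P
def R₁ : FreeGroup Gen4 := FreeGroup.of Gen4.R₁
def R₂ : FreeGroup Gen4 := FreeGroup.of Gen4.R₂

end FourGen

/-- The four-generator presentation of the type three Deligne-Mostow lattice: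
`J³ = R₁ᵖ = R₂ᵖ = P³ᵈ = (P⁻¹J)ᵏ = 1`, `R₂ = PR₁P⁻¹`, `R₂ = JR₁J⁻¹`, `P = R₁R₂`. -/
def rels4Three (p k d : ℕ) : Set (FreeGroup Gen4) :=
  { FourGen.J ^ 3,
    FourGen.R₁ ^ p,
    FourGen.R₂ ^ p,
    (FourGen.P⁻¹ * FourGen.J) ^ k,
    FourGen.P ^ (3 * d),
    FourGen.R₂ * (FourGen.P * FourGen.R₁ * FourGen.P⁻¹)⁻¹,
    FourGen.R₂ * (FourGen.J * FourGen.R₁ * FourGen.J⁻¹)⁻¹,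
    FourGen.P * (FourGen.R₁ * FourGen.R₂)⁻¹ }

/-- Relators of the two-generator presentation of type three Deligne-Mostow lattices. -/
def relsThree (p k d : ℕ) : Set (FreeGroup Gen2) :=
  { (FreeGroup.of Gen2.J) ^ 3, (FreeGroup.of Gen2.R) ^ p,
    (FreeGroup.of Gen2.R * FreeGroup.of Gen2.J) ^ (2 * k),
    (FreeGroup.of Gen2.R * FreeGroup.of Gen2.J * FreeGroup.of Gen2.R *
      (FreeGroup.of Gen2.J) ^ 2) ^ (3 * d),
    FreeGroup.of Gen2.R * FreeGroup.of Gen2.J * FreeGroup.of Gen2.R *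
      (FreeGroup.of Gen2.J) ^ 2 * FreeGroup.of Gen2.R * FreeGroup.of Gen2.J *
      (FreeGroup.of Gen2.R) ^ (p - 1) * (FreeGroup.of Gen2.J) ^ 2 *
      (FreeGroup.of Gen2.R) ^ (p - 1) * FreeGroup.of Gen2.J *
      (FreeGroup.of Gen2.R) ^ (p - 1) * (FreeGroup.of Gen2.J) ^ 2 }

private lemma DM_relone {α : Type*} {rels : Set (FreeGroup α)} {r : FreeGroup α} (h : r ∈ rels) :
    PresentedGroup.mk rels r = 1 :=
  (QuotientGroup.eq_one_iff r).2 (Subgroup.subset_normalClosure h)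

private lemma DM_conjpow {G : Type*} [Group G] (c x : G) (n : ℕ) :
    (c * x * c⁻¹) ^ n = c * x ^ n * c⁻¹ := by
  induction n with
  | zero => simp
  | succ n ih => rw [pow_succ, ih, pow_succ]; group

private lemma DM_shiftpow {G : Type*} [Group G] (x y : G) (n : ℕ) :
    (x * y) ^ n = x * (y * x) ^ n * x⁻¹ := by
  induction n with
  | zero => simp
  | succ n ih => rw [pow_succ, ih, pow_succ]; group

/-- the map on generators for the homomorphism from the 4-generator to 2-generator group -/
private def DMf2 (p k d : ℕ) : Gen4 → PresentedGroup (relsThree p k d)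
  | Gen4.J => PresentedGroup.of Gen2.J
  | Gen4.P => PresentedGroup.of Gen2.R *
      (PresentedGroup.of Gen2.J * PresentedGroup.of Gen2.R * (PresentedGroup.of Gen2.J)⁻¹)
  | Gen4.R₁ => PresentedGroup.of Gen2.R
  | Gen4.R₂ => PresentedGroup.of Gen2.J * PresentedGroup.of Gen2.R * (PresentedGroup.of Gen2.J)⁻¹

/-- the map on generators for the homomorphism from the 2-generator to 4-generator group -/
private def DMf4 (p k d : ℕ) : Gen2 → PresentedGroup (rels4Three p k d)
  | Gen2.J => PresentedGroup.of Gen4.J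
  | Gen2.R => PresentedGroup.of Gen4.R₁

section facts

variable (p k d : ℕ)

-- relations in the two-generator group
private lemma DM2_J : (PresentedGroup.of (rels := relsThree p k d) Gen2.J) ^ 3 = 1 := by
  have := DM_relone (rels := relsThree p k d) (Set.mem_insert _ _)
  rwa [map_pow] at this

private lemma DM2_R : (PresentedGroup.of (rels := relsThree p k d) Gen2.R) ^ p = 1 := by
  have := DM_relone (rels := relsThree p k d)
    (Set.mem_insert_of_mem _ (Set.mem_insert _ _))
  rwa [map_pow] at this

private lemma DM2_RJ :
    (PresentedGroup.of (rels := relsThree p k d) Gen2.R * PresentedGroup.of Gen2.J) ^ (2 * k)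
      = 1 := by
  have := DM_relone (rels := relsThree p k d)
    (Set.mem_insert_of_mem _ (Set.mem_insert_of_mem _ (Set.mem_insert _ _)))
  rwa [map_pow, map_mul] at this

private lemma DM2_P :
    (PresentedGroup.of (rels := relsThree p k d) Gen2.R * PresentedGroup.of Gen2.J *
      PresentedGroup.of Gen2.R * (PresentedGroup.of Gen2.J) ^ 2) ^ (3 * d) = 1 := by
  have := DM_relone (rels := relsThree p k d)
    (Set.mem_insert_of_mem _ (Set.mem_insert_of_mem _ (Set.mem_insert_of_mem _
      (Set.mem_insert _ _))))
  rwa [map_pow, map_mul, map_mul, map_mul, map_pow] at this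

private lemma DM2_W :
    PresentedGroup.of (rels := relsThree p k d) Gen2.R * PresentedGroup.of Gen2.J *
      PresentedGroup.of Gen2.R * (PresentedGroup.of Gen2.J) ^ 2 * PresentedGroup.of Gen2.R *
      PresentedGroup.of Gen2.J * (PresentedGroup.of Gen2.R) ^ (p - 1) *
      (PresentedGroup.of Gen2.J) ^ 2 * (PresentedGroup.of Gen2.R) ^ (p - 1) *
      PresentedGroup.of Gen2.J * (PresentedGroup.of Gen2.R) ^ (p - 1) *
      (PresentedGroup.of Gen2.J) ^ 2 = 1 := by
  have := DM_relone (rels := relsThree p k d)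
    (Set.mem_insert_of_mem _ (Set.mem_insert_of_mem _ (Set.mem_insert_of_mem _
      (Set.mem_insert_of_mem _ rfl))))
  simp only [map_mul, map_pow] at this; exact this

-- relations in the four-generator group
private lemma DM4_J : (PresentedGroup.of (rels := rels4Three p k d) Gen4.J) ^ 3 = 1 := by
  have := DM_relone (rels := rels4Three p k d) (Set.mem_insert _ _)
  rw [map_pow] at this; exact this

private lemma DM4_R₁ : (PresentedGroup.of (rels := rels4Three p k d) Gen4.R₁) ^ p = 1 := by
  have := DM_relone (rels := rels4Three p k d)
    (Set.mem_insert_of_mem _ (Set.mem_insert _ _))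
  rw [map_pow] at this; exact this

private lemma DM4_PJ :
    ((PresentedGroup.of (rels := rels4Three p k d) Gen4.P)⁻¹ * PresentedGroup.of Gen4.J) ^ k
      = 1 := by
  have := DM_relone (rels := rels4Three p k d)
    (Set.mem_insert_of_mem _ (Set.mem_insert_of_mem _ (Set.mem_insert_of_mem _
      (Set.mem_insert _ _))))
  rw [map_pow, map_mul, map_inv] at this; exact this

private lemma DM4_P : (PresentedGroup.of (rels := rels4Three p k d) Gen4.P) ^ (3 * d) = 1 := by
  have := DM_relone (rels := rels4Three p k d)
    (Set.mem_insert_of_mem _ (Set.mem_insert_of_mem _ (Set.mem_insert_of_mem _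
      (Set.mem_insert_of_mem _ (Set.mem_insert _ _)))))
  rw [map_pow] at this; exact this

private lemma DM4_conjP :
    PresentedGroup.of (rels := rels4Three p k d) Gen4.R₂ =
      PresentedGroup.of Gen4.P * PresentedGroup.of Gen4.R₁ * (PresentedGroup.of Gen4.P)⁻¹ := by
  have := DM_relone (rels := rels4Three p k d)
    (Set.mem_insert_of_mem _ (Set.mem_insert_of_mem _ (Set.mem_insert_of_mem _
      (Set.mem_insert_of_mem _ (Set.mem_insert_of_mem _ (Set.mem_insert _ _))))))
  rw [map_mul, map_inv, map_mul, map_mul, map_inv] at this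
  exact mul_inv_eq_one.mp this

private lemma DM4_conjJ :
    PresentedGroup.of (rels := rels4Three p k d) Gen4.R₂ =
      PresentedGroup.of Gen4.J * PresentedGroup.of Gen4.R₁ * (PresentedGroup.of Gen4.J)⁻¹ := by
  have := DM_relone (rels := rels4Three p k d)
    (Set.mem_insert_of_mem _ (Set.mem_insert_of_mem _ (Set.mem_insert_of_mem _
      (Set.mem_insert_of_mem _ (Set.mem_insert_of_mem _ (Set.mem_insert_of_mem _
        (Set.mem_insert _ _)))))))
  rw [map_mul, map_inv, map_mul, map_mul, map_inv] at this
  exact mul_inv_eq_one.mp this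

private lemma DM4_prod :
    PresentedGroup.of (rels := rels4Three p k d) Gen4.P =
      PresentedGroup.of Gen4.R₁ * PresentedGroup.of Gen4.R₂ := by
  have := DM_relone (rels := rels4Three p k d)
    (Set.mem_insert_of_mem _ (Set.mem_insert_of_mem _ (Set.mem_insert_of_mem _
      (Set.mem_insert_of_mem _ (Set.mem_insert_of_mem _ (Set.mem_insert_of_mem _
        (Set.mem_insert_of_mem _ rfl)))))))
  rw [map_mul, map_inv, map_mul] at this
  exact mul_inv_eq_one.mp this

-- P = R₁ (J R₁ J⁻¹) in the four-generator group
private lemma DM4_Pval :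
    PresentedGroup.of (rels := rels4Three p k d) Gen4.P =
      PresentedGroup.of Gen4.R₁ * (PresentedGroup.of Gen4.J * PresentedGroup.of Gen4.R₁ *
        (PresentedGroup.of Gen4.J)⁻¹) := by
  rw [DM4_prod, DM4_conjJ]

-- the relator conditions for the map 4 → 2
private lemma DMhf2 (hp : 0 < p) :
    ∀ r ∈ rels4Three p k d, FreeGroup.lift (DMf2 p k d) r = 1 := by
  intro r hr
  set a := PresentedGroup.of (rels := relsThree p k d) Gen2.J with ha
  set b := PresentedGroup.of (rels := relsThree p k d) Gen2.R with hb
  have h1 : a ^ 3 = 1 := DM2_J p k d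
  have h2 : b ^ p = 1 := DM2_R p k d
  have h3 : (b * a) ^ (2 * k) = 1 := DM2_RJ p k d
  have ha2 : a ^ 2 = a⁻¹ := by
    refine eq_inv_of_mul_eq_one_left ?_
    rw [← pow_succ]; exact h1
  have hbp : b ^ (p - 1) = b⁻¹ := by
    refine eq_inv_of_mul_eq_one_left ?_
    rw [← pow_succ, Nat.sub_add_cancel hp]; exact h2
  have h4 : (b * a * b * a⁻¹) ^ (3 * d) = 1 := by
    have := DM2_P p k d; rwa [ha2] at this
  have h5 : b * a * b * a⁻¹ * b * a * b⁻¹ * a⁻¹ * b⁻¹ * a * b⁻¹ * a⁻¹ = 1 := by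
    have := DM2_W p k d; rwa [ha2, hbp] at this
  simp only [rels4Three, Set.mem_insert_iff, Set.mem_singleton_iff] at hr
  rcases hr with rfl | rfl | rfl | rfl | rfl | rfl | rfl | rfl
  · simpa only [FourGen.J, map_pow, FreeGroup.lift_apply_of, DMf2] using h1
  · simpa only [FourGen.R₁, map_pow, FreeGroup.lift_apply_of, DMf2] using h2
  · simp only [FourGen.R₂, map_pow, FreeGroup.lift_apply_of, DMf2, ← ha, ← hb]
    rw [DM_conjpow, h2]; simp
  · simp only [FourGen.P, FourGen.J, map_pow, map_mul, map_inv, FreeGroup.lift_apply_of, DMf2,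
      ← ha, ← hb]
    have hsq : ((a * b) ^ 2)⁻¹ = b⁻¹ * a⁻¹ * b⁻¹ * a⁻¹ := by rw [pow_two]; group
    have e : (b * (a * b * a⁻¹))⁻¹ * a = a * (b⁻¹ * a⁻¹ * b⁻¹ * a⁻¹) * a⁻¹ * a ^ 3 := by group
    rw [h1, mul_one] at e
    rw [e, ← hsq, DM_conjpow, inv_pow, ← pow_mul]
    have hab : (a * b) ^ (2 * k) = 1 := by
      rw [DM_shiftpow, h3]; simp
    rw [hab]; simp
  · simp only [FourGen.P, map_pow, map_mul, map_inv, FreeGroup.lift_apply_of, DMf2, ← ha, ← hb]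
    have e : b * (a * b * a⁻¹) = b * a * b * a⁻¹ := by group
    rw [e]; exact h4
  · simp only [FourGen.P, FourGen.J, FourGen.R₁, FourGen.R₂, map_mul, map_inv,
      FreeGroup.lift_apply_of, DMf2, ← ha, ← hb]
    have e : a * b * a⁻¹ * (b * (a * b * a⁻¹) * b * (b * (a * b * a⁻¹))⁻¹)⁻¹ =
        (b * a * b * a⁻¹ * b * a * b⁻¹ * a⁻¹ * b⁻¹ * a * b⁻¹ * a⁻¹)⁻¹ := by group
    rw [e, h5, inv_one]
  · simp only [FourGen.J, FourGen.R₁, FourGen.R₂, map_mul, map_inv, FreeGroup.lift_apply_of, DMf2,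
      ← ha, ← hb]
    group
  · simp only [FourGen.P, FourGen.J, FourGen.R₁, FourGen.R₂, map_mul, map_inv,
      FreeGroup.lift_apply_of, DMf2, ← ha, ← hb]
    group

-- the relator conditions for the map 2 → 4
private lemma DMhf4 (hp : 0 < p) :
    ∀ r ∈ relsThree p k d, FreeGroup.lift (DMf4 p k d) r = 1 := by
  intro r hr
  set A := PresentedGroup.of (rels := rels4Three p k d) Gen4.J with hA
  set B := PresentedGroup.of (rels := rels4Three p k d) Gen4.R₁ with hB
  set C := PresentedGroup.of (rels := rels4Three p k d) Gen4.R₂ with hC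
  set Q := PresentedGroup.of (rels := rels4Three p k d) Gen4.P with hQn
  have H1 : A ^ 3 = 1 := DM4_J p k d
  have H2 : B ^ p = 1 := DM4_R₁ p k d
  have H4 : (Q⁻¹ * A) ^ k = 1 := DM4_PJ p k d
  have H5 : Q ^ (3 * d) = 1 := DM4_P p k d
  have h6 : C = Q * B * Q⁻¹ := DM4_conjP p k d
  have h7 : C = A * B * A⁻¹ := DM4_conjJ p k d
  have hQ : Q = B * (A * B * A⁻¹) := DM4_Pval p k d
  have hA2 : A ^ 2 = A⁻¹ := by
    refine eq_inv_of_mul_eq_one_left ?_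
    rw [← pow_succ]; exact H1
  have hBp : B ^ (p - 1) = B⁻¹ := by
    refine eq_inv_of_mul_eq_one_left ?_
    rw [← pow_succ, Nat.sub_add_cancel hp]; exact H2
  simp only [relsThree, Set.mem_insert_iff, Set.mem_singleton_iff] at hr
  rcases hr with rfl | rfl | rfl | rfl | rfl
  · simpa only [map_pow, FreeGroup.lift_apply_of, DMf4] using H1
  · simpa only [map_pow, FreeGroup.lift_apply_of, DMf4] using H2
  · simp only [map_pow, map_mul, FreeGroup.lift_apply_of, DMf4, ← hA, ← hB]
    have hsq : ((A * B) ^ 2)⁻¹ = B⁻¹ * A⁻¹ * B⁻¹ * A⁻¹ := by rw [pow_two]; group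
    have e : Q⁻¹ * A = A * (B⁻¹ * A⁻¹ * B⁻¹ * A⁻¹) * A⁻¹ * A ^ 3 := by rw [hQ]; group
    rw [H1, mul_one] at e
    have hk2 : (A * (B⁻¹ * A⁻¹ * B⁻¹ * A⁻¹) * A⁻¹) ^ k = 1 := by rw [← e]; exact H4
    rw [← hsq, DM_conjpow, inv_pow, ← pow_mul] at hk2
    have hAB : (A * B) ^ (2 * k) = 1 := by
      rw [← inv_eq_one]
      exact conj_eq_one_iff.mp hk2
    rw [DM_shiftpow, hAB]; simp
  · simp only [map_pow, map_mul, FreeGroup.lift_apply_of, DMf4, ← hA, ← hB]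
    have e : B * A * B * A ^ 2 = Q * A ^ 3 := by rw [hQ]; group
    rw [e, H1, mul_one]; exact H5
  · simp only [map_pow, map_mul, FreeGroup.lift_apply_of, DMf4, ← hA, ← hB]
    rw [hA2, hBp]
    have e : B * A * B * A⁻¹ * B * A * B⁻¹ * A⁻¹ * B⁻¹ * A * B⁻¹ * A⁻¹ =
        (Q * B * Q⁻¹) * (A * B * A⁻¹)⁻¹ := by rw [hQ]; group
    rw [e, ← h6, ← h7]; simp

end facts

/-- The four-generator presentation of a type three 3-fold Deligne-Mostow lattice is isomorphic to
its two-generator presentation, via `J ↦ J`, `R₁ ↦ R₁`, `R₂ ↦ JR₁J⁻¹`, `P ↦ R₁·(JR₁J⁻¹)`. -/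
theorem typeThree_presentations_isomorphic (p k d : ℕ) (hp : 0 < p) (hk : 0 < k) (hd : 0 < d)
    (hpd : (1 : ℚ) / d = 1 / 2 - 3 / p) :
    letI rels4 := rels4Three p k d
    letI rels2 := relsThree p k d
    ∃ e : PresentedGroup rels4 ≃* PresentedGroup rels2,
      e (PresentedGroup.of Gen4.J) = PresentedGroup.of Gen2.J ∧
      e (PresentedGroup.of Gen4.R₁) = PresentedGroup.of Gen2.R ∧
      e (PresentedGroup.of Gen4.R₂) =
        PresentedGroup.of Gen2.J * PresentedGroup.of Gen2.R * (PresentedGroup.of Gen2.J)⁻¹ ∧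
      e (PresentedGroup.of Gen4.P) =
        PresentedGroup.of Gen2.R * (PresentedGroup.of Gen2.J * PresentedGroup.of Gen2.R * (PresentedGroup.of Gen2.J)⁻¹) := by
  classical
  have hf2 := DMhf2 p k d hp
  have hf4 := DMhf4 p k d hp
  let φ : PresentedGroup (rels4Three p k d) →* PresentedGroup (relsThree p k d) :=
    PresentedGroup.toGroup hf2
  let ψ : PresentedGroup (relsThree p k d) →* PresentedGroup (rels4Three p k d) :=
    PresentedGroup.toGroup hf4
  have hφJ : φ (PresentedGroup.of Gen4.J) = PresentedGroup.of Gen2.J :=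
    PresentedGroup.toGroup.of hf2
  have hφR₁ : φ (PresentedGroup.of Gen4.R₁) = PresentedGroup.of Gen2.R :=
    PresentedGroup.toGroup.of hf2
  have hφR₂ : φ (PresentedGroup.of Gen4.R₂) =
      PresentedGroup.of Gen2.J * PresentedGroup.of Gen2.R * (PresentedGroup.of Gen2.J)⁻¹ :=
    PresentedGroup.toGroup.of hf2
  have hφP : φ (PresentedGroup.of Gen4.P) = PresentedGroup.of Gen2.R *
      (PresentedGroup.of Gen2.J * PresentedGroup.of Gen2.R * (PresentedGroup.of Gen2.J)⁻¹) :=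
    PresentedGroup.toGroup.of hf2
  have hψJ : ψ (PresentedGroup.of Gen2.J) = PresentedGroup.of Gen4.J :=
    PresentedGroup.toGroup.of hf4
  have hψR : ψ (PresentedGroup.of Gen2.R) = PresentedGroup.of Gen4.R₁ :=
    PresentedGroup.toGroup.of hf4
  have hgf : ψ.comp φ = MonoidHom.id _ := by
    apply PresentedGroup.ext
    intro x
    cases x with
    | J => simp [MonoidHom.comp_apply, hφJ, hψJ]
    | P =>
      simp only [MonoidHom.comp_apply, hφP, map_mul, map_inv, hψJ, hψR, MonoidHom.id_apply]
      exact (DM4_Pval p k d).symm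
    | R₁ => simp [MonoidHom.comp_apply, hφR₁, hψR]
    | R₂ =>
      simp only [MonoidHom.comp_apply, hφR₂, map_mul, map_inv, hψJ, hψR, MonoidHom.id_apply]
      exact (DM4_conjJ p k d).symm
  have hfg : φ.comp ψ = MonoidHom.id _ := by
    apply PresentedGroup.ext
    intro x
    cases x with
    | J => simp [MonoidHom.comp_apply, hψJ, hφJ]
    | R => simp [MonoidHom.comp_apply, hψR, hφR₁]
  refine ⟨MonoidHom.toMulEquiv φ ψ hgf hfg, ?_, ?_, ?_, ?_⟩
  · exact hφJ
  · exact hφR₁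
  · exact hφR₂
  · exact hφP
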